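/- Let κ be a cardinal of countable cofinality and let ⟨κ_n : n < ω⟩ be a strictly increasing sequence of regular cardinals cofinal in κ. Then there exists a sequence ⟨f_α : α < κ⁺⟩ of functions in ∏_{n<ω}(κ_{n+1} \ κ_n) that is strictly increasing modulo finite, i.e., for all α < β < κ⁺ we have f_α(n) < f_β(n) for all but finitely many n. -/
import Mathlib


open Cardinal Ordinal

universe u

/-- The lsub of the chosen cofinal family of previous values, joined with `(κs n).ord`. -/
noncomputable def scBase (κs : ℕ → Cardinal.{u}) (α : Ordinal.{u})
    (IH : ∀ β, β < α → ℕ → Ordinal.{u}) (n : ℕ) : Ordinal.{u} :=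
  Ordinal.lsub.{u, u} (fun i : (Ordinal.exists_lsub_cof α).choose =>
    IH ((Ordinal.exists_lsub_cof α).choose_spec.choose i)
      (by
        conv_rhs => rw [← (Ordinal.exists_lsub_cof α).choose_spec.choose_spec.1]
        exact Ordinal.lt_lsub _ i) n) ⊔ (κs n).ord

noncomputable def scStep (κs : ℕ → Cardinal.{u}) (α : Ordinal.{u})
    (IH : ∀ β, β < α → ℕ → Ordinal.{u}) (n : ℕ) : Ordinal.{u} :=
  if scBase κs α IH n < (κs (n + 1)).ord then scBase κs α IH n else (κs n).ord

noncomputable def scF (κs : ℕ → Cardinal.{u}) : Ordinal.{u} → ℕ → Ordinal.{u} :=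
  Ordinal.lt_wf.fix (C := fun _ => ℕ → Ordinal.{u}) (scStep κs)

lemma scF_eq (κs : ℕ → Cardinal.{u}) (α : Ordinal.{u}) :
    scF κs α = scStep κs α (fun β _ => scF κs β) :=
  Ordinal.lt_wf.fix_eq (C := fun _ => ℕ → Ordinal.{u}) (scStep κs) α

lemma scF_mem (κs : ℕ → Cardinal.{u}) (hmono : StrictMono κs) (α : Ordinal.{u}) (n : ℕ) :
    (κs n).ord ≤ scF κs α n ∧ scF κs α n < (κs (n + 1)).ord := by
  rw [scF_eq]
  unfold scStep
  split
  · exact ⟨le_sup_right, ‹_›⟩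
  · exact ⟨le_rfl, Cardinal.ord_lt_ord.2 (hmono (Nat.lt_succ_self n))⟩

/-- If κ has countable cofinality, witnessed by a strictly increasing sequence
⟨κ_n⟩ of regular cardinals cofinal in κ, then there is a sequence
⟨f_α : α < κ⁺⟩ in ∏_{n<ω}(κ_{n+1} \ κ_n) that is strictly increasing modulo
finite. -/
theorem stmt1 (κ : Cardinal.{u}) (hκω : κ.ord.cof = ℵ₀)
    (κs : ℕ → Cardinal.{u}) (hmono : StrictMono κs)
    (hreg : ∀ n, (κs n).IsRegular) (hcof : (⨆ n, κs n) = κ) :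
    ∃ f : Ordinal.{u} → ℕ → Ordinal.{u},
      (∀ α < (Order.succ κ).ord, ∀ n,
          (κs n).ord ≤ f α n ∧ f α n < (κs (n + 1)).ord) ∧
      (∀ α β, α < β → β < (Order.succ κ).ord →
          ∀ᶠ n in Filter.atTop, f α n < f β n) := by
  have hκsle : ∀ n, κs n ≤ κ := fun n => hcof ▸ le_ciSup (Cardinal.bddAbove_range _) n
  have haleph0 : ℵ₀ < κ := lt_of_le_of_lt ((hreg 0).aleph0_le) ((hmono one_pos).trans_le (hκsle 1))
  -- main domination lemma
  have main : ∀ α, α < (Order.succ κ).ord → ∀ β, β < α →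
      ∀ᶠ n in Filter.atTop, scF κs β n < scF κs α n := by
    intro α
    induction α using Ordinal.induction with
    | h α IH =>
      intro hα β hβ
      set c := (Ordinal.exists_lsub_cof α).choose_spec.choose with hcdef
      have hlsub : Ordinal.lsub.{u,u} c = α :=
        (Ordinal.exists_lsub_cof α).choose_spec.choose_spec.1
      have hcard : #(Ordinal.exists_lsub_cof α).choose = α.cof :=
        (Ordinal.exists_lsub_cof α).choose_spec.choose_spec.2
      -- cof α < κ
      have hcof_le : α.cof ≤ κ := by
        have h1 : α.card ≤ κ := Order.lt_succ_iff.1 (Cardinal.lt_ord.1 hα)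
        exact (Ordinal.cof_le_card α).trans h1
      have hcof_ne : α.cof ≠ κ := by
        intro h
        have h2 := Ordinal.cof_cof α
        rw [h, hκω] at h2
        exact haleph0.ne h2
      have hcof_lt : α.cof < κ := lt_of_le_of_ne hcof_le hcof_ne
      obtain ⟨m, hm⟩ : ∃ m, α.cof < κs m := by
        rw [← hcof, lt_ciSup_iff (Cardinal.bddAbove_range _)] at hcof_lt
        exact hcof_lt
      -- key2 : eventually scBase < κs (n+1).ord
      have key2 : ∀ n, m ≤ n →
          scBase κs α (fun β _ => scF κs β) n < (κs (n + 1)).ord := by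
        intro n hn
        apply sup_lt_iff.2
        constructor
        · apply Cardinal.lsub_lt_ord_of_isRegular (hreg (n + 1))
          · rw [hcard]
            exact hm.trans_le (hmono.monotone (hn.trans (Nat.le_succ n)))
          · intro i
            exact (scF_mem κs hmono _ n).2
        · exact Cardinal.ord_lt_ord.2 (hmono (Nat.lt_succ_self n))
      -- key1 : eventually scF β n < scBase
      obtain ⟨i, hi⟩ : ∃ i, β ≤ c i := Ordinal.lt_lsub_iff.1 (hlsub.symm ▸ hβ)
      have hciα : c i < α := hlsub ▸ Ordinal.lt_lsub.{u,u} c i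
      have hlt_base : ∀ n, scF κs (c i) n < scBase κs α (fun β _ => scF κs β) n := by
        intro n
        exact lt_sup_iff.2 (Or.inl (Ordinal.lt_lsub _ i))
      have key1 : ∀ᶠ n in Filter.atTop, scF κs β n < scBase κs α (fun β _ => scF κs β) n := by
        rcases eq_or_lt_of_le hi with h | h
        · exact Filter.Eventually.of_forall fun n => h ▸ hlt_base n
        · filter_upwards [IH (c i) hciα (hciα.trans hα) β h] with n hn
          exact hn.trans (hlt_base n)
      filter_upwards [key1, Filter.eventually_atTop.2 ⟨m, key2⟩] with n h1 h2
      have : scF κs α n = scBase κs α (fun β _ => scF κs β) n := by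
        rw [scF_eq]; unfold scStep; rw [if_pos h2]
      rw [this]
      exact h1
  exact ⟨scF κs, fun α _ n => scF_mem κs hmono α n, fun α β hab hb => main β hb α hab⟩
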